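/- Let H be a Hilbert space and let A, B : H → H be bounded self-adjoint operators with A coercive and B compact, non-negative, and with nontrivial range. Then the generalized eigenvalue problem A u = λ B u has positive generalized eigenvalues characterized by the min-max principle: λ_j = min over j-dimensional subspaces U ⊂ H with U ∩ Null(B) = {0} of max over nonzero u ∈ U of (Au,u)/(Bu,u). -/

import Mathlib

open scoped InnerProductSpace
open Filter Topology


section aux
variable {H : Type*} [NormedAddCommGroup H] [InnerProductSpace ℝ H] [CompleteSpace H]

lemma my_symm {A : H →L[ℝ] H} (hA : IsSelfAdjoint A) (u v : H) :
    ⟪A u, v⟫_ℝ = ⟪A v, u⟫_ℝ := by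
  have h := hA.isSymmetric u v
  simp only [ContinuousLinearMap.coe_coe] at h
  rw [h, real_inner_comm]

lemma my_bcs {B : H →L[ℝ] H} (hB : IsSelfAdjoint B) (hBnn : ∀ u : H, 0 ≤ ⟪B u, u⟫_ℝ)
    (u v : H) : ⟪B u, v⟫_ℝ ^ 2 ≤ ⟪B u, u⟫_ℝ * ⟪B v, v⟫_ℝ := by
  have key : ∀ t : ℝ, 0 ≤ ⟪B v, v⟫_ℝ * (t * t) + (2 * ⟪B u, v⟫_ℝ) * t + ⟪B u, u⟫_ℝ := by
    intro t
    have h0 := hBnn (u + t • v)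
    have hs := my_symm hB u v
    simp only [map_add, map_smul, inner_add_left, inner_add_right, inner_smul_left,
      inner_smul_right, RCLike.conj_to_real] at h0
    rw [← hs] at h0
    nlinarith [h0]
  have := discrim_le_zero key
  rw [discrim] at this
  nlinarith [this]

lemma my_ker {B : H →L[ℝ] H} (hB : IsSelfAdjoint B) (hBnn : ∀ u : H, 0 ≤ ⟪B u, u⟫_ℝ)
    {u : H} (h : ⟪B u, u⟫_ℝ = 0) : B u = 0 := by
  have := my_bcs hB hBnn u (B u)
  rw [h, zero_mul] at this
  have h2 : ⟪B u, B u⟫_ℝ = 0 := by nlinarith [real_inner_self_nonneg (x := B u)]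
  exact inner_self_eq_zero.mp h2

/-- The coercive selfadjoint operator `A` is a continuous linear equivalence. -/
lemma my_equiv {A : H →L[ℝ] H} (_hA : IsSelfAdjoint A) {δ : ℝ} (hδ : 0 < δ)
    (hcoer : ∀ u : H, δ * ‖u‖ ^ 2 ≤ ⟪A u, u⟫_ℝ) :
    ∃ A' : H ≃L[ℝ] H, ∀ x, A' x = A x := by
  have hbelow : ∀ v, δ * ‖v‖ ≤ ‖A v‖ := by
    intro v
    rcases eq_or_ne v 0 with rfl | hv
    · simp
    · have h1 : δ * ‖v‖ * ‖v‖ ≤ ‖A v‖ * ‖v‖ := by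
        calc δ * ‖v‖ * ‖v‖ = δ * ‖v‖ ^ 2 := by ring
        _ ≤ ⟪A v, v⟫_ℝ := hcoer v
        _ ≤ ‖A v‖ * ‖v‖ := real_inner_le_norm _ _
      exact le_of_mul_le_mul_right h1 (norm_pos_iff.mpr hv)
  have hanti : AntilipschitzWith (⟨δ⁻¹, by positivity⟩ : NNReal) A := by
    apply ContinuousLinearMap.antilipschitz_of_bound
    intro x
    have := hbelow x
    change ‖x‖ ≤ δ⁻¹ * ‖A x‖
    rw [inv_mul_eq_div, le_div_iff₀ hδ]
    nlinarith [this]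
  have hker : LinearMap.ker (A : H →ₗ[ℝ] H) = ⊥ := by
    rw [LinearMap.ker_eq_bot]; exact hanti.injective
  have hclosed : IsClosed (LinearMap.range (A : H →ₗ[ℝ] H) : Set H) := by
    rw [LinearMap.coe_range]; exact hanti.isClosed_range A.uniformContinuous
  have hrange : LinearMap.range (A : H →ₗ[ℝ] H) = ⊤ := by
    haveI := hclosed.completeSpace_coe
    rw [← (LinearMap.range (A : H →ₗ[ℝ] H)).orthogonal_orthogonal, Submodule.eq_top_iff']
    intro v w hw
    obtain rfl : w = 0 := by
      have h1 : ⟪A w, w⟫_ℝ = 0 := hw _ ⟨w, rfl⟩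
      have h2 := hcoer w
      have h3 : ‖w‖ ^ 2 = 0 := le_antisymm (by nlinarith) (by positivity)
      rw [pow_eq_zero_iff two_ne_zero] at h3
      simpa using h3
    exact inner_zero_left _
  exact ⟨ContinuousLinearEquiv.ofBijective A hker hrange, fun x => rfl⟩

lemma my_quad {d C : ℝ} (hC : 0 ≤ C) (key : ∀ t : ℝ, 2 * t * d ≤ t ^ 2 * C) : d = 0 := by
  by_contra hd0
  have hC1 : (0:ℝ) < C + 1 := by linarith
  have h1 := key (d / (C + 1))
  have hd2 : 0 < d ^ 2 := by positivity
  rw [div_pow] at h1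
  have h2 : 2 * (d / (C + 1)) * d = 2 * d ^ 2 / (C + 1) := by ring
  rw [h2] at h1
  rw [div_mul_eq_mul_div, div_le_div_iff₀ hC1 (by positivity)] at h1
  nlinarith [h1, hd2, hC, hC1]

set_option maxHeartbeats 2000000 in
lemma core_step {A B : H →L[ℝ] H} (hA : IsSelfAdjoint A) (hB : IsSelfAdjoint B)
    {δ : ℝ} (hδ : 0 < δ) (hcoer : ∀ u : H, δ * ‖u‖ ^ 2 ≤ ⟪A u, u⟫_ℝ)
    (hBcomp : IsCompactOperator ⇑B) (hBnn : ∀ u : H, 0 ≤ ⟪B u, u⟫_ℝ)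
    {k : ℕ} (E : Fin k → H) (μ : Fin k → ℝ)
    (heig : ∀ i, B (E i) = μ i • A (E i))
    (horth1 : ∀ i, ⟪A (E i), E i⟫_ℝ = 1)
    (horth2 : ∀ i i', i ≠ i' → ⟪A (E i), E i'⟫_ℝ = 0)
    (hex : ∃ u : H, (∀ i, ⟪A u, E i⟫_ℝ = 0) ∧ 0 < ⟪B u, u⟫_ℝ) :
    ∃ (e : H) (M : ℝ), 0 < M ∧ ⟪A e, e⟫_ℝ = 1 ∧ (∀ i, ⟪A e, E i⟫_ℝ = 0) ∧
      B e = M • A e ∧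
      (∀ u : H, (∀ i, ⟪A u, E i⟫_ℝ = 0) → ⟪B u, u⟫_ℝ ≤ M * ⟪A u, u⟫_ℝ) := by
  obtain ⟨A', hA'⟩ := my_equiv hA hδ hcoer
  set P : H → Prop := fun u => ∀ i, ⟪A u, E i⟫_ℝ = 0 with hPdef
  have hannz : ∀ {u : H}, u ≠ 0 → 0 < ⟪A u, u⟫_ℝ := by
    intro u hu
    have h1 : 0 < δ * ‖u‖ ^ 2 := by
      have := norm_pos_iff.mpr hu; positivity
    linarith [hcoer u]
  have hann : ∀ u : H, 0 ≤ ⟪A u, u⟫_ℝ := by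
    intro u
    rcases eq_or_ne u 0 with rfl | hu
    · simp
    · exact (hannz hu).le
  -- normalization
  have hnorm : ∀ u : H, u ≠ 0 → ∃ v : H,
      ⟪A v, v⟫_ℝ = 1 ∧ ⟪B v, v⟫_ℝ = (⟪A u, u⟫_ℝ)⁻¹ * ⟪B u, u⟫_ℝ ∧ (P u → P v) := by
    intro u hu
    have ha := hannz hu
    set c : ℝ := (Real.sqrt ⟪A u, u⟫_ℝ)⁻¹ with hc
    have hc2 : c ^ 2 = (⟪A u, u⟫_ℝ)⁻¹ := by
      rw [hc, ← Real.sqrt_inv, Real.sq_sqrt (by positivity)]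
    refine ⟨c • u, ?_, ?_, ?_⟩
    · rw [map_smul, real_inner_smul_left, real_inner_smul_right, ← mul_assoc, ← pow_two, hc2]
      field_simp
    · rw [map_smul, real_inner_smul_left, real_inner_smul_right, ← mul_assoc, ← pow_two, hc2]
    · intro hPu i
      rw [map_smul, real_inner_smul_left, hPu i, mul_zero]
  set S : Set ℝ := {r : ℝ | ∃ u : H, P u ∧ ⟪A u, u⟫_ℝ = 1 ∧ r = ⟪B u, u⟫_ℝ} with hSdef
  have hSbdd : BddAbove S := by
    refine ⟨‖B‖ * δ⁻¹, ?_⟩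
    rintro r ⟨u, _, hau, rfl⟩
    have h1 : ⟪B u, u⟫_ℝ ≤ ‖B‖ * ‖u‖ * ‖u‖ := by
      calc ⟪B u, u⟫_ℝ ≤ ‖B u‖ * ‖u‖ := real_inner_le_norm _ _
      _ ≤ ‖B‖ * ‖u‖ * ‖u‖ := by
        have := B.le_opNorm u
        nlinarith [norm_nonneg u]
    have h2 : δ * ‖u‖ ^ 2 ≤ 1 := by rw [← hau]; exact hcoer u
    have hB0 : 0 ≤ ‖B‖ := norm_nonneg _
    have h3 : ‖u‖ ^ 2 ≤ δ⁻¹ := by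
      rw [← one_div, le_div_iff₀ hδ]; linarith
    nlinarith [mul_nonneg hB0 (sub_nonneg.mpr h3), norm_nonneg u]
  obtain ⟨u₀, hPu₀, hbu₀⟩ := hex
  have hu₀ : u₀ ≠ 0 := by
    rintro rfl; simp at hbu₀
  obtain ⟨v₀, hav₀, hbv₀, hPv₀⟩ := hnorm u₀ hu₀
  have hSne : S.Nonempty := ⟨⟪B v₀, v₀⟫_ℝ, v₀, hPv₀ hPu₀, hav₀, rfl⟩
  set M : ℝ := sSup S with hMdef
  have hMpos : 0 < M := by
    have h1 : ⟪B v₀, v₀⟫_ℝ ≤ M := le_csSup hSbdd ⟨v₀, hPv₀ hPu₀, hav₀, rfl⟩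
    have h2 : 0 < ⟪B v₀, v₀⟫_ℝ := by
      rw [hbv₀]; exact mul_pos (inv_pos.mpr (hannz hu₀)) hbu₀
    linarith
  have hub : ∀ u : H, P u → ⟪B u, u⟫_ℝ ≤ M * ⟪A u, u⟫_ℝ := by
    intro u hPu
    rcases eq_or_ne u 0 with rfl | hu
    · simp
    · obtain ⟨v, hav, hbv, hPv⟩ := hnorm u hu
      have h1 : ⟪B v, v⟫_ℝ ≤ M := le_csSup hSbdd ⟨v, hPv hPu, hav, rfl⟩
      rw [hbv] at h1
      have ha := hannz hu
      rw [inv_mul_le_iff₀ ha] at h1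
      linarith [h1]
  -- maximizing sequence
  have hseq : ∀ n : ℕ, ∃ u : H, P u ∧ ⟪A u, u⟫_ℝ = 1 ∧
      M - 1 / (n + 1) < ⟪B u, u⟫_ℝ := by
    intro n
    have hlt : M - 1 / (n + 1 : ℝ) < M := by
      have : (0:ℝ) < 1 / (n + 1) := by positivity
      linarith
    obtain ⟨r, hrS, hr⟩ := exists_lt_of_lt_csSup hSne hlt
    obtain ⟨u, hPu, hau, rfl⟩ := hrS
    exact ⟨u, hPu, hau, hr⟩
  choose u hPu hau hbu using hseq
  -- the operator T = A⁻¹ B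
  set T : H → H := fun x => A'.symm (B x) with hTdef
  have hAT : ∀ x, A (T x) = B x := by
    intro x
    rw [← hA']
    exact A'.apply_symm_apply _
  have hPT : ∀ x, P x → P (T x) := by
    intro x hx i
    rw [hAT, my_symm hB, heig i, real_inner_smul_left, my_symm hA, hx i, mul_zero]
  have hTbound : ∀ x, P x → ⟪A (T x), T x⟫_ℝ ≤ M ^ 2 * ⟪A x, x⟫_ℝ := by
    intro x hx
    have h1 : ⟪B x, T x⟫_ℝ ^ 2 ≤ ⟪B x, x⟫_ℝ * ⟪B (T x), T x⟫_ℝ := my_bcs hB hBnn _ _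
    have h2 : ⟪B x, x⟫_ℝ ≤ M * ⟪A x, x⟫_ℝ := hub x hx
    have h3 : ⟪B (T x), T x⟫_ℝ ≤ M * ⟪A (T x), T x⟫_ℝ := hub _ (hPT x hx)
    have hs : ⟪B x, T x⟫_ℝ = ⟪A (T x), T x⟫_ℝ := by rw [hAT]
    have hsn : 0 ≤ ⟪A (T x), T x⟫_ℝ := hann _
    have hxn : 0 ≤ ⟪A x, x⟫_ℝ := hann _
    have hbn : 0 ≤ ⟪B x, x⟫_ℝ := hBnn x
    have hbtn : 0 ≤ ⟪B (T x), T x⟫_ℝ := hBnn _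
    rcases eq_or_lt_of_le hsn with h0 | h0
    · rw [← h0]; positivity
    · nlinarith [h1, h2, h3, hMpos.le, hxn]
  -- the error term tends to zero
  have hwlim : Tendsto (fun n => T (u n) - M • u n) atTop (𝓝 0) := by
    have hwn : ∀ n : ℕ, ‖T (u n) - M • u n‖ ≤ Real.sqrt (2 * M / δ * (1 / (n + 1))) := by
      intro n
      set w := T (u n) - M • u n with hwdef
      have e1 : ⟪A (T (u n)), u n⟫_ℝ = ⟪B (u n), u n⟫_ℝ := by rw [hAT]
      have e2 : ⟪A (u n), T (u n)⟫_ℝ = ⟪B (u n), u n⟫_ℝ := by rw [my_symm hA, hAT]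
      have haww : ⟪A w, w⟫_ℝ =
          ⟪A (T (u n)), T (u n)⟫_ℝ - 2 * M * ⟪B (u n), u n⟫_ℝ + M ^ 2 := by
        rw [hwdef]
        simp only [map_sub, map_smul, inner_sub_left, inner_sub_right, inner_smul_left,
          inner_smul_right, RCLike.conj_to_real]
        rw [e1, e2, hau n]
        ring
      have hb1 : ⟪A (T (u n)), T (u n)⟫_ℝ ≤ M ^ 2 := by
        have := hTbound (u n) (hPu n)
        rwa [hau n, mul_one] at this
      have hb2 : M - 1 / (n + 1) < ⟪B (u n), u n⟫_ℝ := hbu n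
      have haw2 : ⟪A w, w⟫_ℝ ≤ 2 * M / δ * (1 / (n + 1)) * δ := by
        rw [haww]
        have : 2 * M / δ * (1 / (n + 1)) * δ = 2 * M * (1 / (n + 1)) := by
          field_simp
        rw [this]
        nlinarith [hMpos]
      have hnw : δ * ‖w‖ ^ 2 ≤ ⟪A w, w⟫_ℝ := hcoer w
      rw [show Real.sqrt (2 * M / δ * (1 / (n + 1))) =
        Real.sqrt (2 * M / δ * (1 / (n + 1))) from rfl]
      rw [← Real.sqrt_sq (norm_nonneg w)]
      apply Real.sqrt_le_sqrt
      have hq : 2 * M / δ * (1 / (n + 1)) * δ ≤ 2 * M / δ * (1 / (n + 1)) * δ := le_refl _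
      nlinarith [hnw, haw2]
    apply squeeze_zero_norm hwn
    have h0 : Tendsto (fun n : ℕ => 2 * M / δ * (1 / (n + 1) : ℝ)) atTop (𝓝 0) := by
      have := tendsto_one_div_add_atTop_nhds_zero_nat (𝕜 := ℝ)
      have h' := this.const_mul (2 * M / δ)
      simpa using h'
    have := (Real.continuous_sqrt.tendsto 0).comp h0
    simpa [Function.comp_def] using this
  -- extract a convergent subsequence via compactness of B
  have hball : ∀ n, u n ∈ Metric.closedBall (0 : H) (Real.sqrt δ⁻¹) := by
    intro n
    rw [Metric.mem_closedBall, dist_zero_right]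
    have h2 : δ * ‖u n‖ ^ 2 ≤ 1 := by rw [← hau n]; exact hcoer (u n)
    have h3 : ‖u n‖ ^ 2 ≤ δ⁻¹ := by rw [← one_div, le_div_iff₀ hδ]; linarith
    rw [← Real.sqrt_sq (norm_nonneg (u n))]
    exact Real.sqrt_le_sqrt h3
  have hKcpt : IsCompact (closure (B '' Metric.closedBall (0 : H) (Real.sqrt δ⁻¹))) := by
    exact IsCompactOperator.isCompact_closure_image_of_bounded
      (f := (B : H →ₗ[ℝ] H)) hBcomp Metric.isBounded_closedBall
  have hmem : ∀ n, B (u n) ∈ closure (B '' Metric.closedBall (0 : H) (Real.sqrt δ⁻¹)) :=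
    fun n => subset_closure ⟨u n, hball n, rfl⟩
  obtain ⟨y, -, φ, hφ, hconv⟩ := hKcpt.tendsto_subseq hmem
  have hTconv : Tendsto (fun m => T (u (φ m))) atTop (𝓝 (A'.symm y)) :=
    ((A'.symm.continuous.tendsto y).comp hconv)
  have hMu : Tendsto (fun m => M • u (φ m)) atTop (𝓝 (A'.symm y)) := by
    have h1 : Tendsto (fun m => T (u (φ m)) - (T (u (φ m)) - M • u (φ m))) atTop
        (𝓝 (A'.symm y - 0)) := hTconv.sub (hwlim.comp hφ.tendsto_atTop)
    simpa using h1
  set e : H := M⁻¹ • A'.symm y with hedef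
  have hulim : Tendsto (fun m => u (φ m)) atTop (𝓝 e) := by
    have h1 := hMu.const_smul M⁻¹
    have h2 : (fun m => M⁻¹ • M • u (φ m)) = fun m => u (φ m) := by
      funext m
      rw [smul_smul, inv_mul_cancel₀ hMpos.ne', one_smul]
    rwa [h2] at h1
  -- limit values
  have hAe : Tendsto (fun m => ⟪A (u (φ m)), u (φ m)⟫_ℝ) atTop (𝓝 ⟪A e, e⟫_ℝ) :=
    ((A.continuous.tendsto e).comp hulim).inner hulim
  have hae : ⟪A e, e⟫_ℝ = 1 := by
    have h2 : (fun m => ⟪A (u (φ m)), u (φ m)⟫_ℝ) = fun _ => (1:ℝ) :=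
      funext fun m => hau (φ m)
    rw [h2] at hAe
    exact tendsto_nhds_unique hAe tendsto_const_nhds
  have hPe : P e := by
    intro i
    have h1 : Tendsto (fun m => ⟪A (u (φ m)), E i⟫_ℝ) atTop (𝓝 ⟪A e, E i⟫_ℝ) :=
      ((A.continuous.tendsto e).comp hulim).inner tendsto_const_nhds
    have h2 : (fun m => ⟪A (u (φ m)), E i⟫_ℝ) = fun _ => (0:ℝ) :=
      funext fun m => hPu (φ m) i
    rw [h2] at h1
    exact tendsto_nhds_unique h1 tendsto_const_nhds
  have hbe : ⟪B e, e⟫_ℝ = M := by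
    have h1 : Tendsto (fun m => ⟪B (u (φ m)), u (φ m)⟫_ℝ) atTop (𝓝 ⟪B e, e⟫_ℝ) :=
      ((B.continuous.tendsto e).comp hulim).inner hulim
    have h2 : Tendsto (fun m => ⟪B (u (φ m)), u (φ m)⟫_ℝ - M) atTop (𝓝 0) := by
      apply squeeze_zero_norm (a := fun m : ℕ => 1 / (m + 1 : ℝ))
      · intro m
        rw [Real.norm_eq_abs, abs_le]
        constructor
        · have h3 : (1 : ℝ) / (φ m + 1) ≤ 1 / (m + 1) := by
            apply one_div_le_one_div_of_le
            · positivity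
            · have hm : m ≤ φ m := hφ.le_apply
              push_cast
              exact_mod_cast Nat.add_le_add_right hm 1
          have := hbu (φ m)
          linarith
        · have h4 : ⟪B (u (φ m)), u (φ m)⟫_ℝ ≤ M := by
            have := hub (u (φ m)) (hPu (φ m))
            rwa [hau (φ m), mul_one] at this
          have : (0:ℝ) < 1 / (m + 1) := by positivity
          linarith
      · exact tendsto_one_div_add_atTop_nhds_zero_nat
    have h3 : Tendsto (fun m => ⟪B (u (φ m)), u (φ m)⟫_ℝ) atTop (𝓝 M) := by
      have := h2.add_const M
      simpa using this
    exact tendsto_nhds_unique h1 h3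
  clear_value e M
  clear hAe hTconv hMu hulim hconv hwlim hball hKcpt hmem hbu hau hPu u
  clear hAT hPT hTbound hTdef T hMdef hSbdd hSne hSdef S hedef
  -- Euler-Lagrange: eigen equation against the constraint space
  have heV : ∀ v : H, P v → ⟪B e, v⟫_ℝ = M * ⟪A e, v⟫_ℝ := by
    intro v hv
    set d : ℝ := ⟪B e, v⟫_ℝ - M * ⟪A e, v⟫_ℝ with hddef
    set C : ℝ := M * ⟪A v, v⟫_ℝ - ⟪B v, v⟫_ℝ with hCdef
    have hC : 0 ≤ C := by
      have := hub v hv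
      rw [hCdef]; linarith
    have key : ∀ t : ℝ, 2 * t * d ≤ t ^ 2 * C := by
      intro t
      have hPtv : P (e + t • v) := by
        intro i
        have h5 : ⟪A e, E i⟫_ℝ = 0 := hPe i
        have h6 : ⟪A v, E i⟫_ℝ = 0 := hv i
        simp only [map_add, map_smul, inner_add_left, real_inner_smul_left]
        rw [h5, h6]
        ring
      have h0 := hub _ hPtv
      have hsb : ⟪B v, e⟫_ℝ = ⟪B e, v⟫_ℝ := my_symm hB v e
      have hsa : ⟪A v, e⟫_ℝ = ⟪A e, v⟫_ℝ := my_symm hA v e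
      simp only [map_add, map_smul, inner_add_left, inner_add_right, inner_smul_left,
        inner_smul_right, RCLike.conj_to_real] at h0
      rw [hsb, hsa, hbe, hae] at h0
      rw [hddef, hCdef]
      nlinarith [h0]
    have hd : d = 0 := my_quad hC key
    rw [hddef] at hd
    linarith [hd]
  -- extension of the eigen equation to the whole space
  have haEi : ∀ i, ⟪A e, E i⟫_ℝ = 0 := hPe
  have hbEi : ∀ i, ⟪B e, E i⟫_ℝ = 0 := by
    intro i
    rw [my_symm hB, heig i, real_inner_smul_left, my_symm hA, haEi i, mul_zero]
  have hext : ∀ w : H, ⟪B e, w⟫_ℝ = M * ⟪A e, w⟫_ℝ := by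
    intro w
    set w' : H := w - ∑ i, ⟪A w, E i⟫_ℝ • E i with hw'def
    have hPw' : P w' := by
      intro m
      rw [hw'def, map_sub, inner_sub_left, map_sum, sum_inner]
      have hsum : ∑ i, ⟪A (⟪A w, E i⟫_ℝ • E i), E m⟫_ℝ = ⟪A w, E m⟫_ℝ := by
        rw [Finset.sum_eq_single m]
        · rw [map_smul, real_inner_smul_left, horth1 m, mul_one]
        · intro i _ him
          rw [map_smul, real_inner_smul_left, horth2 i m him, mul_zero]
        · intro hm
          exact absurd (Finset.mem_univ m) hm
      rw [hsum]
      ring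
    have hBsum : ⟪B e, w⟫_ℝ = ⟪B e, w'⟫_ℝ := by
      rw [hw'def, inner_sub_right, inner_sum]
      have : ∑ i, ⟪B e, ⟪A w, E i⟫_ℝ • E i⟫_ℝ = 0 := by
        apply Finset.sum_eq_zero
        intro i _
        rw [real_inner_smul_right, hbEi i, mul_zero]
      rw [this]
      ring
    have hAsum : ⟪A e, w⟫_ℝ = ⟪A e, w'⟫_ℝ := by
      rw [hw'def, inner_sub_right, inner_sum]
      have : ∑ i, ⟪A e, ⟪A w, E i⟫_ℝ • E i⟫_ℝ = 0 := by
        apply Finset.sum_eq_zero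
        intro i _
        rw [real_inner_smul_right]
        have : ⟪A e, E i⟫_ℝ = 0 := haEi i
        rw [this, mul_zero]
      rw [this]
      ring
    rw [hBsum, hAsum]
    exact heV w' hPw'
  have heq : B e = M • A e := by
    have h0 : ∀ w : H, ⟪B e - M • A e, w⟫_ℝ = 0 := by
      intro w
      rw [inner_sub_left, real_inner_smul_left, hext w]
      ring
    have h1 := h0 (B e - M • A e)
    rw [inner_self_eq_zero] at h1
    exact sub_eq_zero.mp h1
  exact ⟨e, M, hMpos, hae, hPe, heq, hub⟩

lemma my_bpos {B : H →L[ℝ] H} (hB : IsSelfAdjoint B) (hBnn : ∀ u : H, 0 ≤ ⟪B u, u⟫_ℝ)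
    {U : Submodule ℝ H} (hUker : U ⊓ LinearMap.ker (B : H →ₗ[ℝ] H) = ⊥)
    {u : H} (hu : u ∈ U) (hu0 : u ≠ 0) : 0 < ⟪B u, u⟫_ℝ := by
  rcases eq_or_lt_of_le (hBnn u) with h | h
  · exfalso
    have hBu : B u = 0 := my_ker hB hBnn h.symm
    have : u ∈ U ⊓ LinearMap.ker (B : H →ₗ[ℝ] H) := ⟨hu, LinearMap.mem_ker.mpr hBu⟩
    rw [hUker] at this
    exact hu0 (by simpa using this)
  · exact h

set_option maxHeartbeats 1000000 in
lemma exists_family {A B : H →L[ℝ] H} (hA : IsSelfAdjoint A) (hB : IsSelfAdjoint B)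
    {δ : ℝ} (hδ : 0 < δ) (hcoer : ∀ u : H, δ * ‖u‖ ^ 2 ≤ ⟪A u, u⟫_ℝ)
    (hBcomp : IsCompactOperator ⇑B) (hBnn : ∀ u : H, 0 ≤ ⟪B u, u⟫_ℝ)
    {j : ℕ} (U : Submodule ℝ H) (hUrank : Module.finrank ℝ U = j)
    (hUker : U ⊓ LinearMap.ker (B : H →ₗ[ℝ] H) = ⊥) :
    ∀ k : ℕ, k ≤ j → ∃ (E : Fin k → H) (μ : Fin k → ℝ),
      (∀ i, 0 < μ i) ∧
      (∀ i, ⟪A (E i), E i⟫_ℝ = 1) ∧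
      (∀ i i', i ≠ i' → ⟪A (E i), E i'⟫_ℝ = 0) ∧
      (∀ i, B (E i) = μ i • A (E i)) ∧
      (∀ (i : Fin k) (u : H), (∀ i' : Fin k, i' < i → ⟪A u, E i'⟫_ℝ = 0) →
        ⟪B u, u⟫_ℝ ≤ μ i * ⟪A u, u⟫_ℝ) := by
  intro k
  induction k with
  | zero =>
    intro _
    exact ⟨Fin.elim0, Fin.elim0, fun i => i.elim0, fun i => i.elim0, fun i => i.elim0,
      fun i => i.elim0, fun i => i.elim0⟩
  | succ k ih =>
    intro hk
    obtain ⟨E, μ, hpos, h1, h2, heig, hub⟩ := ih (le_trans (Nat.le_succ k) hk)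
    have hex : ∃ u : H, (∀ i, ⟪A u, E i⟫_ℝ = 0) ∧ 0 < ⟪B u, u⟫_ℝ := by
      set Φ : U →ₗ[ℝ] (Fin k → ℝ) := LinearMap.pi (fun i =>
        (((innerSL ℝ (E i)).comp A).toLinearMap).comp U.subtype) with hΦ
      have hker : LinearMap.ker Φ ≠ ⊥ := by
        intro hbot
        have hinj : Function.Injective Φ := LinearMap.ker_eq_bot.mp hbot
        have hle := LinearMap.finrank_le_finrank_of_injective hinj
        rw [hUrank] at hle
        have : Module.finrank ℝ (Fin k → ℝ) = k := by
          simp [Module.finrank_pi]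
        omega
      obtain ⟨x, hxker, hx0⟩ := (Submodule.ne_bot_iff _).mp hker
      have hΦx : ∀ i, ⟪A (x : H), E i⟫_ℝ = 0 := by
        intro i
        have h0 := congrFun (LinearMap.mem_ker.mp hxker) i
        have : ⟪E i, A (x : H)⟫_ℝ = 0 := h0
        rwa [real_inner_comm] at this
      have hxH : (x : H) ≠ 0 := fun h => hx0 (by exact_mod_cast Subtype.ext h)
      exact ⟨(x : H), hΦx, my_bpos hB hBnn hUker x.2 hxH⟩
    obtain ⟨e, M, hM, hae, hPe, heq, hubnew⟩ :=
      core_step hA hB hδ hcoer hBcomp hBnn E μ heig h1 h2 hex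
    refine ⟨Fin.snoc E e, Fin.snoc μ M, ?_, ?_, ?_, ?_, ?_⟩
    · intro i
      refine Fin.lastCases ?_ ?_ i
      · simpa using hM
      · intro i0; simpa using hpos i0
    · intro i
      refine Fin.lastCases ?_ ?_ i
      · simpa using hae
      · intro i0; simpa using h1 i0
    · intro i i'
      refine Fin.lastCases ?_ ?_ i
      · refine Fin.lastCases ?_ ?_ i'
        · intro hne; exact absurd rfl hne
        · intro i1 _
          simp only [Fin.snoc_last, Fin.snoc_castSucc]
          exact hPe i1
      · intro i0
        refine Fin.lastCases ?_ ?_ i'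
        · intro _
          simp only [Fin.snoc_last, Fin.snoc_castSucc]
          rw [my_symm hA]
          exact hPe i0
        · intro i1 hne
          simp only [Fin.snoc_castSucc]
          exact h2 i0 i1 (fun h => hne (by rw [h]))
    · intro i
      refine Fin.lastCases ?_ ?_ i
      · simpa using heq
      · intro i0; simpa using heig i0
    · intro i
      refine Fin.lastCases ?_ ?_ i
      · intro u hu
        simp only [Fin.snoc_last]
        apply hubnew
        intro i'
        have := hu i'.castSucc (Fin.castSucc_lt_last i')
        rwa [Fin.snoc_castSucc] at this
      · intro i0 u hu
        simp only [Fin.snoc_castSucc]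
        apply hub i0 u
        intro i' hi'
        have := hu i'.castSucc (by rwa [Fin.castSucc_lt_castSucc_iff])
        rwa [Fin.snoc_castSucc] at this

lemma my_sum_inner (G : H →L[ℝ] H) {n : ℕ} (E : Fin n → H) (g : Fin n → ℝ) (c : Fin n → ℝ)
    (h : ∀ i i', ⟪G (E i), E i'⟫_ℝ = if i = i' then g i else 0) :
    ⟪G (∑ i, c i • E i), ∑ i, c i • E i⟫_ℝ = ∑ i, g i * c i ^ 2 := by
  rw [map_sum, sum_inner]
  refine Finset.sum_congr rfl fun i _ => ?_
  rw [map_smul, inner_sum, Finset.sum_eq_single i]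
  · rw [real_inner_smul_left, real_inner_smul_right, h i i, if_pos rfl]; ring
  · intro i' _ hne
    rw [real_inner_smul_left, real_inner_smul_right, h i i',
      if_neg (fun hh => hne hh.symm)]
    ring
  · intro hm
    exact absurd (Finset.mem_univ i) hm

lemma my_bdd {A B : H →L[ℝ] H} (hB : IsSelfAdjoint B) (hBnn : ∀ u : H, 0 ≤ ⟪B u, u⟫_ℝ)
    {U : Submodule ℝ H} (hfr : 0 < Module.finrank ℝ U)
    (hUker : U ⊓ LinearMap.ker (B : H →ₗ[ℝ] H) = ⊥) :
    BddAbove {q : ℝ | ∃ u ∈ U, u ≠ 0 ∧ q = ⟪A u, u⟫_ℝ / ⟪B u, u⟫_ℝ} := by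
  haveI : FiniteDimensional ℝ U := Module.finite_of_finrank_pos hfr
  haveI : Nontrivial U := Module.nontrivial_of_finrank_pos hfr
  have hsph : IsCompact (Metric.sphere (0 : U) 1) := isCompact_sphere 0 1
  have hne : (Metric.sphere (0 : U) 1).Nonempty := NormedSpace.sphere_nonempty.mpr zero_le_one
  have hcont : Continuous fun x : U => ⟪B (x : H), (x : H)⟫_ℝ :=
    ((B.continuous.comp continuous_subtype_val).inner continuous_subtype_val)
  obtain ⟨x₀, hx₀mem, hx₀min⟩ := hsph.exists_isMinOn hne hcont.continuousOn
  set ε : ℝ := ⟪B (x₀ : H), (x₀ : H)⟫_ℝ with hε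
  have hx₀0 : (x₀ : H) ≠ 0 := by
    have : ‖x₀‖ = 1 := by simpa using hx₀mem
    intro h
    rw [show ‖x₀‖ = ‖(x₀ : H)‖ from rfl, h] at this
    simp at this
  have hεpos : 0 < ε := my_bpos hB hBnn hUker x₀.2 hx₀0
  refine ⟨‖A‖ / ε, ?_⟩
  rintro q ⟨u, huU, hu0, rfl⟩
  have hnu : 0 < ‖u‖ := norm_pos_iff.mpr hu0
  set x : U := (‖u‖⁻¹ : ℝ) • ⟨u, huU⟩ with hx
  have hxmem : x ∈ Metric.sphere (0 : U) 1 := by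
    simp only [mem_sphere_iff_norm, sub_zero, hx, norm_smul, norm_inv, norm_norm]
    rw [show ‖(⟨u, huU⟩ : U)‖ = ‖u‖ from rfl]
    simp [hnu.ne']
  have hmin := hx₀min hxmem
  have hxval : ⟪B (x : H), (x : H)⟫_ℝ = ‖u‖⁻¹ ^ 2 * ⟪B u, u⟫_ℝ := by
    rw [hx]
    show ⟪B ((‖u‖⁻¹ : ℝ) • u), (‖u‖⁻¹ : ℝ) • u⟫_ℝ = _
    rw [map_smul, real_inner_smul_left, real_inner_smul_right]
    ring
  have hBlow : ε * ‖u‖ ^ 2 ≤ ⟪B u, u⟫_ℝ := by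
    have h1 : ε ≤ ‖u‖⁻¹ ^ 2 * ⟪B u, u⟫_ℝ := by
      rw [← hxval]; exact hmin
    have h2 : ε * ‖u‖ ^ 2 ≤ (‖u‖⁻¹ ^ 2 * ⟪B u, u⟫_ℝ) * ‖u‖ ^ 2 :=
      mul_le_mul_of_nonneg_right h1 (by positivity)
    calc ε * ‖u‖ ^ 2 ≤ (‖u‖⁻¹ ^ 2 * ⟪B u, u⟫_ℝ) * ‖u‖ ^ 2 := h2
    _ = ⟪B u, u⟫_ℝ := by field_simp
  have hAup : ⟪A u, u⟫_ℝ ≤ ‖A‖ * ‖u‖ ^ 2 := by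
    calc ⟪A u, u⟫_ℝ ≤ ‖A u‖ * ‖u‖ := real_inner_le_norm _ _
    _ ≤ ‖A‖ * ‖u‖ ^ 2 := by
      have := A.le_opNorm u
      nlinarith [norm_nonneg u]
  have hbpos : 0 < ⟪B u, u⟫_ℝ := my_bpos hB hBnn hUker huU hu0
  rw [div_le_div_iff₀ hbpos hεpos]
  have hA0 : 0 ≤ ‖A‖ := norm_nonneg _
  nlinarith [hBlow, hAup, mul_le_mul_of_nonneg_left hBlow hA0]

end aux

set_option maxHeartbeats 1000000 in
/-- Min-max principle for the generalized eigenvalue problem `A u = λ B u`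
with `A` bounded self-adjoint coercive and `B` compact self-adjoint non-negative
with nontrivial range: the value
`λ_j = min_{U, dim U = j, U ∩ Null B = 0} max_{u ∈ U \ 0} (Au,u)/(Bu,u)`
is positive and is a generalized eigenvalue. -/
theorem stmt6 {H : Type*} [NormedAddCommGroup H] [InnerProductSpace ℝ H] [CompleteSpace H]
    (A B : H →L[ℝ] H) (hA : IsSelfAdjoint A) (hB : IsSelfAdjoint B)
    (δ : ℝ) (hδ : 0 < δ) (hcoer : ∀ u : H, δ * ‖u‖ ^ 2 ≤ ⟪A u, u⟫_ℝ)
    (hBcomp : IsCompactOperator ⇑B) (hBnn : ∀ u : H, 0 ≤ ⟪B u, u⟫_ℝ)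
    (hBne : LinearMap.range (B : H →ₗ[ℝ] H) ≠ ⊥)
    (j : ℕ) (hj : 1 ≤ j)
    (hU : ∃ U : Submodule ℝ H, Module.finrank ℝ U = j ∧ U ⊓ LinearMap.ker (B : H →ₗ[ℝ] H) = ⊥) :
    let lamj : ℝ := sInf { r : ℝ | ∃ U : Submodule ℝ H,
      Module.finrank ℝ U = j ∧ U ⊓ LinearMap.ker (B : H →ₗ[ℝ] H) = ⊥ ∧
      r = sSup { q : ℝ | ∃ u ∈ U, u ≠ 0 ∧ q = ⟪A u, u⟫_ℝ / ⟪B u, u⟫_ℝ } }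
    0 < lamj ∧ ∃ u : H, u ≠ 0 ∧ A u = lamj • B u := by
  intro lamj
  obtain ⟨U, hUrank, hUker⟩ := hU
  obtain ⟨E, μ, hpos, h1, h2, heig, hub⟩ :=
    exists_family hA hB hδ hcoer hBcomp hBnn U hUrank hUker j le_rfl
  have hannz : ∀ {u : H}, u ≠ 0 → 0 < ⟪A u, u⟫_ℝ := by
    intro u hu
    have h1 : 0 < δ * ‖u‖ ^ 2 := by
      have := norm_pos_iff.mpr hu; positivity
    linarith [hcoer u]
  have hdiagA : ∀ i i', ⟪A (E i), E i'⟫_ℝ = if i = i' then (1:ℝ) else 0 := by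
    intro i i'
    by_cases h : i = i'
    · subst h; rw [if_pos rfl]; exact h1 i
    · rw [if_neg h]; exact h2 i i' h
  have hdiagB : ∀ i i', ⟪B (E i), E i'⟫_ℝ = if i = i' then μ i else 0 := by
    intro i i'
    rw [heig i, real_inner_smul_left, hdiagA i i']
    split_ifs <;> ring
  set iL : Fin j := ⟨j - 1, by omega⟩ with hiL
  set m : ℝ := μ iL with hm
  have hmpos : 0 < m := hpos iL
  have hiLtop : ∀ i : Fin j, i ≤ iL := by
    intro i
    have hv : (iL : ℕ) = j - 1 := rfl
    have := i.isLt
    rw [Fin.le_def, hv]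
    omega
  have hmle : ∀ i, m ≤ μ i := by
    intro i
    rcases eq_or_lt_of_le (hiLtop i) with h | h
    · rw [hm, ← h]
    · have hcon : ∀ i' : Fin j, i' < i → ⟪A (E iL), E i'⟫_ℝ = 0 := by
        intro i' hi'
        exact h2 iL i' (fun hh => absurd (hh ▸ hi') (by intro hcon; exact absurd (lt_trans hcon h) (lt_irrefl _)))
      have := hub i (E iL) hcon
      rw [h1 iL, mul_one] at this
      have hbL : ⟪B (E iL), E iL⟫_ℝ = m := by
        rw [hdiagB iL iL, if_pos rfl]
      linarith [this, hbL ▸ this]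
  -- coefficient extraction
  have hcoeff : ∀ (c : Fin j → ℝ) (i : Fin j), ⟪A (∑ k, c k • E k), E i⟫_ℝ = c i := by
    intro c i
    rw [map_sum, sum_inner, Finset.sum_eq_single i]
    · rw [map_smul, real_inner_smul_left, h1 i, mul_one]
    · intro k _ hk
      rw [map_smul, real_inner_smul_left, h2 k i hk, mul_zero]
    · intro hm'; exact absurd (Finset.mem_univ i) hm'
  have hLI : LinearIndependent ℝ E := by
    rw [Fintype.linearIndependent_iff]
    intro c hc i
    have := hcoeff c i
    rw [hc] at this
    simpa using this.symm
  set Us : Submodule ℝ H := Submodule.span ℝ (Set.range E) with hUs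
  have hmemUs : ∀ u : H, u ∈ Us ↔ ∃ c : Fin j → ℝ, ∑ i, c i • E i = u := by
    intro u
    rw [hUs]
    exact Submodule.mem_span_range_iff_exists_fun ℝ
  have hUsrank : Module.finrank ℝ Us = j := by
    rw [hUs, finrank_span_eq_card hLI, Fintype.card_fin]
  have hvalA : ∀ c : Fin j → ℝ, ⟪A (∑ i, c i • E i), ∑ i, c i • E i⟫_ℝ = ∑ i, c i ^ 2 := by
    intro c
    rw [my_sum_inner A E (fun _ => (1:ℝ)) c hdiagA]
    simp [one_mul]
  have hvalB : ∀ c : Fin j → ℝ, ⟪B (∑ i, c i • E i), ∑ i, c i • E i⟫_ℝ = ∑ i, μ i * c i ^ 2 :=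
    fun c => my_sum_inner B E μ c hdiagB
  have hBlower : ∀ c : Fin j → ℝ, m * (∑ i, c i ^ 2) ≤ ∑ i, μ i * c i ^ 2 := by
    intro c
    rw [Finset.mul_sum]
    apply Finset.sum_le_sum
    intro i _
    exact mul_le_mul_of_nonneg_right (hmle i) (sq_nonneg _)
  have hUsker : Us ⊓ LinearMap.ker (B : H →ₗ[ℝ] H) = ⊥ := by
    rw [Submodule.eq_bot_iff]
    rintro u ⟨huU, huK⟩
    obtain ⟨c, rfl⟩ := (hmemUs u).mp huU
    have hb0 : ⟪B (∑ i, c i • E i), ∑ i, c i • E i⟫_ℝ = 0 := by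
      rw [show B (∑ i, c i • E i) = 0 from LinearMap.mem_ker.mp huK]
      exact inner_zero_left _
    rw [hvalB c] at hb0
    have hsq : ∑ i, c i ^ 2 ≤ 0 := by
      by_contra hcon
      push_neg at hcon
      have := hBlower c
      nlinarith [this, hb0]
    have hc0 : ∀ i, c i = 0 := by
      intro i
      have hnn : ∀ i ∈ Finset.univ, (0:ℝ) ≤ c i ^ 2 := fun i _ => sq_nonneg _
      have := Finset.sum_le_sum hnn  -- not what we need
      have hz : ∑ i, c i ^ 2 = 0 := le_antisymm hsq (Finset.sum_nonneg hnn)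
      have := (Finset.sum_eq_zero_iff_of_nonneg hnn).mp hz i (Finset.mem_univ i)
      exact pow_eq_zero_iff two_ne_zero |>.mp this
    simp [hc0]
  -- the Rayleigh sup over the span
  have hQle : ∀ q ∈ {q : ℝ | ∃ u ∈ Us, u ≠ 0 ∧ q = ⟪A u, u⟫_ℝ / ⟪B u, u⟫_ℝ}, q ≤ m⁻¹ := by
    rintro q ⟨u, huU, hu0, rfl⟩
    have hbpos : 0 < ⟪B u, u⟫_ℝ := my_bpos hB hBnn hUsker huU hu0
    obtain ⟨c, rfl⟩ := (hmemUs u).mp huU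
    rw [hvalA c, hvalB c]
    rw [show (m⁻¹ : ℝ) = 1 / m from (one_div m).symm]
    rw [div_le_div_iff₀ (by rwa [hvalB c] at hbpos) hmpos]
    have := hBlower c
    linarith [this]
  have hQmem : m⁻¹ ∈ {q : ℝ | ∃ u ∈ Us, u ≠ 0 ∧ q = ⟪A u, u⟫_ℝ / ⟪B u, u⟫_ℝ} := by
    refine ⟨E iL, Submodule.subset_span ⟨iL, rfl⟩, ?_, ?_⟩
    · intro h
      have := h1 iL
      rw [h] at this
      simpa using this
    · rw [h1 iL, show ⟪B (E iL), E iL⟫_ℝ = m from by rw [hdiagB iL iL, if_pos rfl]]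
      rw [one_div]
  have hQsup : sSup {q : ℝ | ∃ u ∈ Us, u ≠ 0 ∧ q = ⟪A u, u⟫_ℝ / ⟪B u, u⟫_ℝ} = m⁻¹ :=
    le_antisymm (csSup_le ⟨m⁻¹, hQmem⟩ hQle) (le_csSup ⟨m⁻¹, hQle⟩ hQmem)
  -- the outer set
  set Sout : Set ℝ := { r : ℝ | ∃ U : Submodule ℝ H,
      Module.finrank ℝ U = j ∧ U ⊓ LinearMap.ker (B : H →ₗ[ℝ] H) = ⊥ ∧
      r = sSup { q : ℝ | ∃ u ∈ U, u ≠ 0 ∧ q = ⟪A u, u⟫_ℝ / ⟪B u, u⟫_ℝ } } with hSout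
  have houtmem : m⁻¹ ∈ Sout := ⟨Us, hUsrank, hUsker, hQsup.symm⟩
  have hlow : ∀ r ∈ Sout, m⁻¹ ≤ r := by
    rintro r ⟨U', hU'rank, hU'ker, rfl⟩
    -- find a constrained vector in U'
    set Φ : U' →ₗ[ℝ] (Fin (j-1) → ℝ) := LinearMap.pi (fun i =>
      (((innerSL ℝ (E (Fin.castLE (by omega) i))).comp A).toLinearMap).comp U'.subtype) with hΦ
    have hker : LinearMap.ker Φ ≠ ⊥ := by
      intro hbot
      have hinj : Function.Injective Φ := LinearMap.ker_eq_bot.mp hbot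
      have hle := LinearMap.finrank_le_finrank_of_injective hinj
      rw [hU'rank] at hle
      have : Module.finrank ℝ (Fin (j-1) → ℝ) = j - 1 := by
        simp [Module.finrank_pi]
      omega
    obtain ⟨x, hxker, hx0⟩ := (Submodule.ne_bot_iff _).mp hker
    have hxH : (x : H) ≠ 0 := fun h => hx0 (by exact_mod_cast Subtype.ext h)
    have hcon : ∀ i' : Fin j, i' < iL → ⟪A (x : H), E i'⟫_ℝ = 0 := by
      intro i' hi'
      have hival : (i' : ℕ) < j - 1 := hi'
      have h0 := congrFun (LinearMap.mem_ker.mp hxker) ⟨(i' : ℕ), hival⟩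
      have h3 : ⟪E (Fin.castLE (by omega) ⟨(i' : ℕ), hival⟩), A (x : H)⟫_ℝ = 0 := h0
      have h4 : Fin.castLE (by omega : j - 1 ≤ j) ⟨(i' : ℕ), hival⟩ = i' := by
        apply Fin.ext; rfl
      rw [h4] at h3
      rwa [real_inner_comm] at h3
    have hray := hub iL (x : H) hcon
    have hbpos : 0 < ⟪B (x : H), (x : H)⟫_ℝ := my_bpos hB hBnn hU'ker x.2 hxH
    have hq : m⁻¹ ≤ ⟪A (x : H), (x : H)⟫_ℝ / ⟪B (x : H), (x : H)⟫_ℝ := by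
      rw [show (m⁻¹ : ℝ) = 1 / m from (one_div m).symm]
      rw [div_le_div_iff₀ hmpos hbpos]
      linarith [hray]
    refine le_trans hq (le_csSup ?_ ⟨(x : H), x.2, hxH, rfl⟩)
    exact my_bdd hB hBnn (by rw [hU'rank]; omega) hU'ker
  have hlam : lamj = m⁻¹ := by
    apply le_antisymm
    · exact csInf_le ⟨m⁻¹, hlow⟩ houtmem
    · exact le_csInf ⟨m⁻¹, houtmem⟩ hlow
  constructor
  · rw [hlam]; positivity
  · refine ⟨E iL, ?_, ?_⟩
    · intro h
      have := h1 iL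
      rw [h] at this
      simpa using this
    · rw [hlam, heig iL, smul_smul, inv_mul_cancel₀ hmpos.ne', one_smul]
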